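/- If H(x_1, x_2) is the symmetric formal series with x_1 \partial_{x_1} H = x_2/(x_2 - x_1) - z_2/((z_2 - z_1)(1 - a z_1^a)) (where x_i = z_i e^{-z_i^a}), then x_1 x_2 \partial_{x_1}\partial_{x_2} H = -x_1 x_2/(x_1 - x_2)^2 + (x_1 x_2/(z_1 - z_2)^2) (dz_1/dx_1)(dz_2/dx_2); equivalently the bidifferential d_1 d_2 H equals dz_1 dz_2/(z_1 - z_2)^2 - dx_1 dx_2/(x_1 - x_2)^2. -/

import Mathlib

lemma hasDerivAt_x (a : ℕ) (ha : 0 < a) (z : ℂ) :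
    HasDerivAt (fun w : ℂ => w * Complex.exp (-w ^ a))
      (Complex.exp (-z ^ a) * (1 - (a : ℂ) * z ^ a)) z := by
  have hpow : HasDerivAt (fun w : ℂ => -w ^ a) (-((a : ℂ) * z ^ (a - 1))) z :=
    (hasDerivAt_pow a z).neg
  have hexp : HasDerivAt (fun w : ℂ => Complex.exp (-w ^ a))
      (Complex.exp (-z ^ a) * -((a : ℂ) * z ^ (a - 1))) z := hpow.cexp
  have h := (hasDerivAt_id z).fun_mul hexp
  have hz : z ^ (a - 1) * z = z ^ a := by
    rw [← pow_succ, Nat.sub_add_cancel ha]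
  refine h.congr_deriv (Eq.symm ?_)
  simp only [id_eq, one_mul]
  linear_combination (Complex.exp (-z ^ a) * (a : ℂ)) * hz

set_option maxHeartbeats 1000000

/-- With `x(z) = z e^{-z^a}` and `x₁∂_{x₁}H = x₂/(x₂-x₁) - z₂/((z₂-z₁)(1-az₁^a))`,
applying `x₂∂_{x₂} = (z₂/(1-az₂^a)) ∂_{z₂}` yields
`x₁x₂ ∂_{x₁}∂_{x₂} H = -x₁x₂/(x₁-x₂)² + (x₁x₂/(z₁-z₂)²)(dz₁/dx₁)(dz₂/dx₂)`,
where `dz/dx = 1/x'(z)`. -/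
theorem unstable_02_identity (a : ℕ) (ha : 0 < a) (z₁ z₂ : ℂ)
    (h1 : 1 - (a : ℂ) * z₁ ^ a ≠ 0) (h2 : 1 - (a : ℂ) * z₂ ^ a ≠ 0)
    (hne : z₁ ≠ z₂)
    (hx : z₁ * Complex.exp (-z₁ ^ a) ≠ z₂ * Complex.exp (-z₂ ^ a)) :
    z₂ / (1 - (a : ℂ) * z₂ ^ a) *
        deriv (fun w : ℂ =>
          (w * Complex.exp (-w ^ a)) /
              (w * Complex.exp (-w ^ a) - z₁ * Complex.exp (-z₁ ^ a)) -
            w / ((w - z₁) * (1 - (a : ℂ) * z₁ ^ a))) z₂ =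
      -((z₁ * Complex.exp (-z₁ ^ a)) * (z₂ * Complex.exp (-z₂ ^ a))) /
          (z₁ * Complex.exp (-z₁ ^ a) - z₂ * Complex.exp (-z₂ ^ a)) ^ 2 +
        (z₁ * Complex.exp (-z₁ ^ a)) * (z₂ * Complex.exp (-z₂ ^ a)) /
          ((z₁ - z₂) ^ 2 * deriv (fun w : ℂ => w * Complex.exp (-w ^ a)) z₁ *
            deriv (fun w : ℂ => w * Complex.exp (-w ^ a)) z₂) := by
  set x₁ := z₁ * Complex.exp (-z₁ ^ a) with hx1
  set x₂ := z₂ * Complex.exp (-z₂ ^ a) with hx2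
  set c₁ := 1 - (a : ℂ) * z₁ ^ a with hc1
  set c₂ := 1 - (a : ℂ) * z₂ ^ a with hc2
  have hX1 := hasDerivAt_x a ha z₁
  have hX2 := hasDerivAt_x a ha z₂
  have hxsub : x₂ - x₁ ≠ 0 := sub_ne_zero.mpr (Ne.symm hx)
  have hzsub : z₂ - z₁ ≠ 0 := sub_ne_zero.mpr (Ne.symm hne)
  have hdenom : (z₂ - z₁) * c₁ ≠ 0 := mul_ne_zero hzsub h1
  -- derivative of first term
  have hT1 : HasDerivAt (fun w : ℂ =>
      (w * Complex.exp (-w ^ a)) / (w * Complex.exp (-w ^ a) - x₁))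
      ((Complex.exp (-z₂ ^ a) * c₂ * (x₂ - x₁) -
        x₂ * (Complex.exp (-z₂ ^ a) * c₂)) / (x₂ - x₁) ^ 2) z₂ := by
    exact hX2.div (hX2.sub_const x₁) hxsub
  have hT2 : HasDerivAt (fun w : ℂ => w / ((w - z₁) * c₁))
      ((1 * ((z₂ - z₁) * c₁) - z₂ * (1 * c₁)) / ((z₂ - z₁) * c₁) ^ 2) z₂ := by
    exact (hasDerivAt_id z₂).div
      (((hasDerivAt_id z₂).sub_const z₁).mul_const c₁) hdenom
  have hD : deriv (fun w : ℂ =>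
      (w * Complex.exp (-w ^ a)) / (w * Complex.exp (-w ^ a) - x₁) -
        w / ((w - z₁) * c₁)) z₂ =
      (Complex.exp (-z₂ ^ a) * c₂ * (x₂ - x₁) -
        x₂ * (Complex.exp (-z₂ ^ a) * c₂)) / (x₂ - x₁) ^ 2 -
      (1 * ((z₂ - z₁) * c₁) - z₂ * (1 * c₁)) / ((z₂ - z₁) * c₁) ^ 2 :=
    (hT1.sub hT2).deriv
  rw [hD, hX1.deriv, hX2.deriv]
  have he1 : Complex.exp (-z₁ ^ a) ≠ 0 := Complex.exp_ne_zero _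
  have he2 : Complex.exp (-z₂ ^ a) ≠ 0 := Complex.exp_ne_zero _
  have hxsub' : x₁ - x₂ ≠ 0 := sub_ne_zero.mpr hx
  set e₁ := Complex.exp (-z₁ ^ a)
  set e₂ := Complex.exp (-z₂ ^ a)
  have hA : (e₂ * c₂ * (x₂ - x₁) - x₂ * (e₂ * c₂)) / (x₂ - x₁) ^ 2
      = -(x₁ * (e₂ * c₂)) / (x₂ - x₁) ^ 2 := by
    rw [show e₂ * c₂ * (x₂ - x₁) - x₂ * (e₂ * c₂) = -(x₁ * (e₂ * c₂)) by ring]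
  have hB : (1 * ((z₂ - z₁) * c₁) - z₂ * (1 * c₁)) / ((z₂ - z₁) * c₁) ^ 2
      = -z₁ / ((z₂ - z₁) ^ 2 * c₁) := by
    field_simp
    ring
  rw [hA, hB, mul_sub]
  have eq1 : z₂ / c₂ * (-(x₁ * (e₂ * c₂)) / (x₂ - x₁) ^ 2)
      = -(x₁ * x₂) / (x₁ - x₂) ^ 2 := by
    rw [hx2]
    rw [show (x₁ - x₂) ^ 2 = (x₂ - x₁) ^ 2 by ring]
    have hxsub2 : z₂ * e₂ - x₁ ≠ 0 := hxsub
    field_simp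
    ring
  have eq2 : z₂ / c₂ * (-z₁ / ((z₂ - z₁) ^ 2 * c₁))
      = -(x₁ * x₂ / ((z₁ - z₂) ^ 2 * (e₁ * c₁) * (e₂ * c₂))) := by
    have hq1 : c₂ * ((z₂ - z₁) ^ 2 * c₁) ≠ 0 :=
      mul_ne_zero h2 (mul_ne_zero (pow_ne_zero 2 hzsub) h1)
    have hq2 : (z₁ - z₂) ^ 2 * (e₁ * c₁) * (e₂ * c₂) ≠ 0 :=
      mul_ne_zero (mul_ne_zero (pow_ne_zero 2 (sub_ne_zero.mpr hne))
        (mul_ne_zero he1 h1)) (mul_ne_zero he2 h2)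
    rw [hx1, hx2, div_mul_div_comm, ← neg_div, div_eq_div_iff hq1 hq2]
    ring
  rw [eq1, eq2, sub_neg_eq_add]
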